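/- Let γ > 1 and ε ∈ (0,1) satisfy γε > 1. Let (ē_t)_{t≥0} and (Δ̄_t)_{t≥0} be sequences of nonnegative reals with ē_0 = 0 and ē_t ≤ (1/(γε)) ē_{t−1} + (1/(γ(1−ε))) Δ̄_{t−1} for all t ≥ 1. Then for every T ≥ 1, Σ_{t=0}^{T−1} ē_t ≤ (1/(γ(1−ε)))·(1 + 1/(γε−1))·Σ_{t=0}^{T−1} Δ̄_t. -/

import Mathlib

/-- Summing the error-contraction recursion
`ē_t ≤ (1/(γε)) ē_{t-1} + (1/(γ(1-ε))) Δ̄_{t-1}` with `ē_0 = 0` yields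
`Σ_{t<T} ē_t ≤ (1/(γ(1-ε)))(1 + 1/(γε-1)) Σ_{t<T} Δ̄_t`. -/
theorem stmt_1 (γ ε : ℝ) (hγ : 1 < γ) (hε0 : 0 < ε) (hε1 : ε < 1)
    (hγε : 1 < γ * ε)
    (ebar Δbar : ℕ → ℝ)
    (he_nonneg : ∀ t, 0 ≤ ebar t) (hΔ_nonneg : ∀ t, 0 ≤ Δbar t)
    (he0 : ebar 0 = 0)
    (hrec : ∀ t : ℕ, 1 ≤ t →
      ebar t ≤ (1 / (γ * ε)) * ebar (t - 1) + (1 / (γ * (1 - ε))) * Δbar (t - 1)) :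
    ∀ T : ℕ, 1 ≤ T →
      ∑ t ∈ Finset.range T, ebar t ≤
        (1 / (γ * (1 - ε))) * (1 + 1 / (γ * ε - 1)) * ∑ t ∈ Finset.range T, Δbar t := by
  intro T hT
  obtain ⟨n, rfl⟩ : ∃ n, T = n + 1 := ⟨T - 1, (Nat.succ_pred_eq_of_pos hT).symm⟩
  set S := ∑ t ∈ Finset.range (n + 1), ebar t with hS
  set D := ∑ t ∈ Finset.range (n + 1), Δbar t with hD
  have hγεpos : (0:ℝ) < γ * ε := lt_trans one_pos hγε
  have h1ε : (0:ℝ) < 1 - ε := by linarith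
  have hγ1ε : (0:ℝ) < γ * (1 - ε) := mul_pos (by linarith) h1ε
  have key : S ≤ (1 / (γ * ε)) * S + (1 / (γ * (1 - ε))) * D := by
    have h1 : S = (∑ i ∈ Finset.range n, ebar (i + 1)) + ebar 0 :=
      Finset.sum_range_succ' ebar n
    have h2 : (∑ i ∈ Finset.range n, ebar (i + 1)) ≤
        (1 / (γ * ε)) * (∑ i ∈ Finset.range n, ebar i) +
        (1 / (γ * (1 - ε))) * (∑ i ∈ Finset.range n, Δbar i) := by
      rw [Finset.mul_sum, Finset.mul_sum, ← Finset.sum_add_distrib]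
      refine Finset.sum_le_sum fun i _ => ?_
      simpa using hrec (i + 1) (Nat.le_add_left 1 i)
    have he_le : (∑ i ∈ Finset.range n, ebar i) ≤ S := by
      rw [hS, Finset.sum_range_succ]
      linarith [he_nonneg n]
    have hΔ_le : (∑ i ∈ Finset.range n, Δbar i) ≤ D := by
      rw [hD, Finset.sum_range_succ]
      linarith [hΔ_nonneg n]
    have hq : (0:ℝ) ≤ 1 / (γ * ε) := by positivity
    have hc : (0:ℝ) ≤ 1 / (γ * (1 - ε)) := by positivity
    calc S = (∑ i ∈ Finset.range n, ebar (i + 1)) + ebar 0 := h1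
      _ = ∑ i ∈ Finset.range n, ebar (i + 1) := by rw [he0]; ring
      _ ≤ (1 / (γ * ε)) * (∑ i ∈ Finset.range n, ebar i) +
          (1 / (γ * (1 - ε))) * (∑ i ∈ Finset.range n, Δbar i) := h2
      _ ≤ (1 / (γ * ε)) * S + (1 / (γ * (1 - ε))) * D := by
          gcongr
  have hγεne : γ * ε ≠ 0 := ne_of_gt hγεpos
  have hγ1εne : γ * (1 - ε) ≠ 0 := ne_of_gt hγ1ε
  have hγεm1 : (0:ℝ) < γ * ε - 1 := by linarith
  have h3 : γ * ε * (1 / (γ * ε) * S + 1 / (γ * (1 - ε)) * D)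
      = S + γ * ε / (γ * (1 - ε)) * D := by field_simp
  have h4 : γ * ε * S ≤ S + γ * ε / (γ * (1 - ε)) * D :=
    h3 ▸ mul_le_mul_of_nonneg_left key hγεpos.le
  have hfinal : (1 / (γ * (1 - ε))) * (1 + 1 / (γ * ε - 1))
      = (γ * ε / (γ * (1 - ε))) / (γ * ε - 1) := by
    field_simp
    ring
  rw [hfinal, div_mul_eq_mul_div, le_div_iff₀ hγεm1]
  nlinarith [h4]
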